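/- arXiv:1707.09697 — 3 statements merged into one kernel-verified Lean document; each statement's English description precedes it below -/
import Mathlib

section
/- Let d = 2, a > 0, ν ≥ 2, and let A = (a_{kl}) be a symmetric 2×2 positive semi-definite matrix with a_{11} > 0, a_{22} > 0 and inf{uᵀAu/‖u‖² : u in the closed nonnegative orthant, u≠0} > 0. Then the function m̃(h_1,h_2) = (ν!)^{-2} κ_ν² (a_{11}h_1^{2ν} + 2a_{12}h_1^ν h_2^ν + a_{22}h_2^{2ν}) + a/(n h_1 h_2) with a = c·b·‖K‖₂² is uniquely minimized over (h_1,h_2) ∈ ℝ_+² by h_{opt,1} = ( c(ν!)² b ‖K‖₂² a_{22}^{(ν+1)/(2ν)} / ( 2nν κ_ν² a_{11}^{(ν+1)/(2ν)} ( a_{11}^{1/2} a_{22}^{1/2} + a_{12} ) ) )^{1/(2ν+2)} and h_{opt,2} = (a_{11}/a_{22})^{1/(2ν)} h_{opt,1}. -/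
open MeasureTheory Filter Real
open scoped Topology BigOperators

noncomputable section
set_option maxHeartbeats 1600000

/-- Strict Bernoulli-type inequality. -/
lemma stmt8_bern (ν : ℕ) (hν : 1 ≤ ν) (t : ℝ) (ht : 0 < t) :
    ((ν : ℝ) + 1) * t - ν ≤ t ^ (ν + 1) ∧ (t ≠ 1 → ((ν : ℝ) + 1) * t - ν < t ^ (ν + 1)) := by
  have hb : 1 + (ν : ℝ) * (t - 1) ≤ t ^ ν := by
    simpa using one_add_mul_le_pow (by linarith : (-2 : ℝ) ≤ t - 1) ν
  have hps : t ^ (ν + 1) = t ^ ν * t := pow_succ t ν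
  have h2 : (1 + (ν : ℝ) * (t - 1)) * t ≤ t ^ ν * t :=
    mul_le_mul_of_nonneg_right hb ht.le
  have hν1 : (1 : ℝ) ≤ (ν : ℝ) := by exact_mod_cast hν
  constructor
  · nlinarith [sq_nonneg (t - 1)]
  · intro hne
    have : 0 < (t - 1) ^ 2 := by
      have : t - 1 ≠ 0 := sub_ne_zero.mpr hne
      positivity
    nlinarith

/-- One-variable minimization of `A p^ν + B / p`. -/
lemma stmt8_one_var (ν : ℕ) (hν : 1 ≤ ν) (A B p q : ℝ) (hA : 0 < A)
    (hp : 0 < p) (hq : 0 < q) (hkey : A * ν * q ^ (ν + 1) = B) :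
    A * q ^ ν + B / q ≤ A * p ^ ν + B / p ∧
      (A * p ^ ν + B / p ≤ A * q ^ ν + B / q → p = q) := by
  set t : ℝ := p / q with htdef
  have ht : 0 < t := div_pos hp hq
  have hpt : p = t * q := by rw [htdef]; exact (div_mul_cancel₀ p hq.ne').symm
  have hid : A * p ^ ν + B / p - (A * q ^ ν + B / q)
      = (A * q ^ ν / t) * (t ^ (ν + 1) + ν - ((ν : ℝ) + 1) * t) := by
    rw [hpt, ← hkey]
    field_simp
    ring
  obtain ⟨hber, hbers⟩ := stmt8_bern ν hν t ht
  have hfac : 0 < A * q ^ ν / t := by positivity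
  constructor
  · nlinarith [mul_nonneg hfac.le (by linarith : (0:ℝ) ≤ t ^ (ν + 1) + ν - ((ν : ℝ) + 1) * t)]
  · intro hle
    by_contra hne
    have ht1 : t ≠ 1 := by
      intro h1
      apply hne
      rw [hpt, h1, one_mul]
    have := hbers ht1
    nlinarith [mul_pos hfac (by linarith : (0:ℝ) < t ^ (ν + 1) + ν - ((ν : ℝ) + 1) * t)]

lemma stmt8_half_sq {a : ℝ} (ha : 0 < a) : (a ^ ((1 : ℝ) / 2)) ^ 2 = a := by
  rw [← Real.rpow_natCast (a ^ ((1 : ℝ) / 2)) 2, ← Real.rpow_mul ha.le]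
  norm_num

set_option maxHeartbeats 800000 in
/-- Core minimization result, with all constants abstract. -/
lemma stmt8_core (ν : ℕ) (hν : 2 ≤ ν)
    (a11 a12 a22 t1 t2 S Cc B X r : ℝ)
    (ht1 : 0 < t1) (ht2 : 0 < t2)
    (ht1sq : t1 ^ 2 = a11) (ht2sq : t2 ^ 2 = a22)
    (hSdef : S = t1 * t2 + a12) (hS : 0 < S)
    (hCc : 0 < Cc) (hX : 0 < X) (hr : 0 < r)
    (hrν : r ^ ν = t1 / t2)
    (hkey : 2 * Cc * S * ν * (r * X ^ 2) ^ (ν + 1) = B) :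
    (∀ u v : ℝ, 0 < u → 0 < v →
      Cc * (a11 * X ^ (2 * ν) + 2 * a12 * X ^ ν * (r * X) ^ ν + a22 * (r * X) ^ (2 * ν)) +
          B / (X * (r * X))
        ≤ Cc * (a11 * u ^ (2 * ν) + 2 * a12 * u ^ ν * v ^ ν + a22 * v ^ (2 * ν)) + B / (u * v)) ∧
    (∀ u v : ℝ, 0 < u → 0 < v →
      Cc * (a11 * u ^ (2 * ν) + 2 * a12 * u ^ ν * v ^ ν + a22 * v ^ (2 * ν)) + B / (u * v)
        ≤ Cc * (a11 * X ^ (2 * ν) + 2 * a12 * X ^ ν * (r * X) ^ ν + a22 * (r * X) ^ (2 * ν)) +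
          B / (X * (r * X)) →
      u = X ∧ v = r * X) := by
  have hν1 : 1 ≤ ν := by omega
  have hνne : ν ≠ 0 := by omega
  have hdecomp : ∀ u v : ℝ,
      Cc * (a11 * u ^ (2 * ν) + 2 * a12 * u ^ ν * v ^ ν + a22 * v ^ (2 * ν)) + B / (u * v)
        = Cc * (t1 * u ^ ν - t2 * v ^ ν) ^ 2 + (2 * Cc * S * (u * v) ^ ν + B / (u * v)) := by
    intro u v
    rw [← ht1sq, ← ht2sq, hSdef]
    ring
  have hgap0 : t1 * X ^ ν - t2 * (r * X) ^ ν = 0 := by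
    rw [mul_pow, hrν]
    field_simp
    ring
  have hprod : X * (r * X) = r * X ^ 2 := by ring
  have hp0 : 0 < r * X ^ 2 := by positivity
  have hA' : 0 < 2 * Cc * S := by positivity
  have hFopt :
      Cc * (a11 * X ^ (2 * ν) + 2 * a12 * X ^ ν * (r * X) ^ ν + a22 * (r * X) ^ (2 * ν)) +
          B / (X * (r * X))
        = 2 * Cc * S * (r * X ^ 2) ^ ν + B / (r * X ^ 2) := by
    rw [hdecomp X (r * X), hgap0, hprod]
    ring
  constructor
  · intro u v hu hv
    rw [hFopt, hdecomp u v]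
    have hmono := (stmt8_one_var ν hν1 (2 * Cc * S) B (u * v) (r * X ^ 2) hA'
      (mul_pos hu hv) hp0 hkey).1
    linarith [mul_nonneg hCc.le (sq_nonneg (t1 * u ^ ν - t2 * v ^ ν))]
  · intro u v hu hv hle
    rw [hFopt, hdecomp u v] at hle
    obtain ⟨hmono, huniq⟩ := stmt8_one_var ν hν1 (2 * Cc * S) B (u * v) (r * X ^ 2) hA'
      (mul_pos hu hv) hp0 hkey
    have hsqnn : 0 ≤ Cc * (t1 * u ^ ν - t2 * v ^ ν) ^ 2 :=
      mul_nonneg hCc.le (sq_nonneg _)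
    have hpeq : u * v = r * X ^ 2 := huniq (by linarith)
    have hsq0 : t1 * u ^ ν - t2 * v ^ ν = 0 := by
      rw [hpeq] at hle
      have h1 : (t1 * u ^ ν - t2 * v ^ ν) ^ 2 = 0 := by
        nlinarith [sq_nonneg (t1 * u ^ ν - t2 * v ^ ν)]
      exact pow_eq_zero_iff (by norm_num : (2 : ℕ) ≠ 0) |>.mp h1
    have hveq : v = r * u := by
      have hpow : v ^ ν = (r * u) ^ ν := by
        rw [mul_pow, hrν]
        field_simp
        nlinarith [hsq0]
      exact (pow_left_strictMonoOn₀ hνne).injOn hv.le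
        (by positivity : (0 : ℝ) ≤ r * u) hpow
    have hueq : u = X := by
      have h2 : r * u ^ 2 = r * X ^ 2 := by rw [← hpeq, hveq]; ring
      have h3 : u ^ 2 = X ^ 2 := mul_left_cancel₀ hr.ne' h2
      exact (pow_left_strictMonoOn₀ (by norm_num : (2 : ℕ) ≠ 0)).injOn hu.le hX.le h3
    exact ⟨hueq, by rw [hveq, hueq]⟩

/-- Remark after Theorem 3.3, the case `d = 2`: the asymptotic risk
`m̃(h₁,h₂) = (ν!)⁻² κ_ν² (a₁₁h₁^{2ν} + 2a₁₂h₁^ν h₂^ν + a₂₂h₂^{2ν}) + c b ‖K‖₂²/(n h₁ h₂)`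
is uniquely minimized over the open positive quadrant by the explicit pair
`(h_opt,1, h_opt,2)`. -/
theorem statement8
    (ν : ℕ) (hν : 2 ≤ ν) (n : ℕ) (hn : 1 ≤ n)
    (c b K2 κν : ℝ) (hc : 0 < c) (hb : 0 < b) (hK2 : 0 < K2) (hκν : 0 < κν)
    (a11 a12 a22 : ℝ) (ha11 : 0 < a11) (ha22 : 0 < a22)
    (hpsd : ∀ u1 u2 : ℝ, 0 ≤ a11 * u1 ^ 2 + 2 * a12 * u1 * u2 + a22 * u2 ^ 2)
    (hcoer : ∃ c₀ > (0 : ℝ), ∀ u1 u2 : ℝ, 0 ≤ u1 → 0 ≤ u2 →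
      c₀ * (u1 ^ 2 + u2 ^ 2) ≤ a11 * u1 ^ 2 + 2 * a12 * u1 * u2 + a22 * u2 ^ 2) :
    IsMinOn
      (fun h : ℝ × ℝ =>
        ((Nat.factorial ν : ℝ) ^ 2)⁻¹ * κν ^ 2 *
            (a11 * h.1 ^ (2 * ν) + 2 * a12 * h.1 ^ ν * h.2 ^ ν + a22 * h.2 ^ (2 * ν)) +
          c * b * K2 / ((n : ℝ) * h.1 * h.2))
      {h : ℝ × ℝ | 0 < h.1 ∧ 0 < h.2}
      ((c * (Nat.factorial ν : ℝ) ^ 2 * b * K2 * a22 ^ (((ν : ℝ) + 1) / (2 * ν)) /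
          (2 * n * ν * κν ^ 2 * a11 ^ (((ν : ℝ) + 1) / (2 * ν)) *
            (a11 ^ ((1 : ℝ) / 2) * a22 ^ ((1 : ℝ) / 2) + a12))) ^ ((1 : ℝ) / (2 * ν + 2)),
        (a11 / a22) ^ ((1 : ℝ) / (2 * ν)) *
          (c * (Nat.factorial ν : ℝ) ^ 2 * b * K2 * a22 ^ (((ν : ℝ) + 1) / (2 * ν)) /
            (2 * n * ν * κν ^ 2 * a11 ^ (((ν : ℝ) + 1) / (2 * ν)) *
              (a11 ^ ((1 : ℝ) / 2) * a22 ^ ((1 : ℝ) / 2) + a12))) ^ ((1 : ℝ) / (2 * ν + 2))) ∧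
    ∀ h ∈ {h : ℝ × ℝ | 0 < h.1 ∧ 0 < h.2},
      IsMinOn
        (fun h : ℝ × ℝ =>
          ((Nat.factorial ν : ℝ) ^ 2)⁻¹ * κν ^ 2 *
              (a11 * h.1 ^ (2 * ν) + 2 * a12 * h.1 ^ ν * h.2 ^ ν + a22 * h.2 ^ (2 * ν)) +
            c * b * K2 / ((n : ℝ) * h.1 * h.2))
        {h : ℝ × ℝ | 0 < h.1 ∧ 0 < h.2} h →
      h = ((c * (Nat.factorial ν : ℝ) ^ 2 * b * K2 * a22 ^ (((ν : ℝ) + 1) / (2 * ν)) /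
          (2 * n * ν * κν ^ 2 * a11 ^ (((ν : ℝ) + 1) / (2 * ν)) *
            (a11 ^ ((1 : ℝ) / 2) * a22 ^ ((1 : ℝ) / 2) + a12))) ^ ((1 : ℝ) / (2 * ν + 2)),
        (a11 / a22) ^ ((1 : ℝ) / (2 * ν)) *
          (c * (Nat.factorial ν : ℝ) ^ 2 * b * K2 * a22 ^ (((ν : ℝ) + 1) / (2 * ν)) /
            (2 * n * ν * κν ^ 2 * a11 ^ (((ν : ℝ) + 1) / (2 * ν)) *
              (a11 ^ ((1 : ℝ) / 2) * a22 ^ ((1 : ℝ) / 2) + a12))) ^ ((1 : ℝ) / (2 * ν + 2))) := by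
  -- basic positivity facts
  have hn' : (0 : ℝ) < n := by exact_mod_cast hn
  have hνnat : 0 < ν := by omega
  have hν' : (0 : ℝ) < ν := by exact_mod_cast hνnat
  have hν0 : (ν : ℝ) ≠ 0 := hν'.ne'
  have hfact : (0 : ℝ) < (Nat.factorial ν : ℝ) := by
    exact_mod_cast Nat.factorial_pos ν
  obtain ⟨t1, ht1def⟩ : ∃ x : ℝ, x = a11 ^ ((1 : ℝ) / 2) := ⟨_, rfl⟩
  obtain ⟨t2, ht2def⟩ : ∃ x : ℝ, x = a22 ^ ((1 : ℝ) / 2) := ⟨_, rfl⟩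
  have ht1 : 0 < t1 := ht1def ▸ Real.rpow_pos_of_pos ha11 _
  have ht2 : 0 < t2 := ht2def ▸ Real.rpow_pos_of_pos ha22 _
  have ht1sq : t1 ^ 2 = a11 := by rw [ht1def]; exact stmt8_half_sq ha11
  have ht2sq : t2 ^ 2 = a22 := by rw [ht2def]; exact stmt8_half_sq ha22
  obtain ⟨S, hSdef⟩ : ∃ x : ℝ, x = t1 * t2 + a12 := ⟨_, rfl⟩
  have hS : 0 < S := by
    obtain ⟨c₀, hc₀, hco⟩ := hcoer
    have h := hco t2 t1 ht2.le ht1.le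
    rw [ht1sq, ht2sq] at h
    rw [hSdef]
    nlinarith [mul_pos ht1 ht2, mul_pos ha11 ha22]
  obtain ⟨qe, hqedef⟩ : ∃ x : ℝ, x = ((ν : ℝ) + 1) / (2 * ν) := ⟨_, rfl⟩
  have ha11q : 0 < a11 ^ qe := Real.rpow_pos_of_pos ha11 _
  have ha22q : 0 < a22 ^ qe := Real.rpow_pos_of_pos ha22 _
  obtain ⟨E, hEdef⟩ : ∃ x : ℝ, x = c * (Nat.factorial ν : ℝ) ^ 2 * b * K2 * a22 ^ qe /
      (2 * n * ν * κν ^ 2 * a11 ^ qe * S) := ⟨_, rfl⟩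
  have hE : 0 < E := by
    rw [hEdef]
    exact div_pos
      (mul_pos (mul_pos (mul_pos (mul_pos hc (pow_pos hfact 2)) hb) hK2) ha22q)
      (mul_pos (mul_pos (mul_pos (mul_pos (mul_pos two_pos hn') hν') (pow_pos hκν 2)) ha11q) hS)
  obtain ⟨X, hXdef⟩ : ∃ x : ℝ, x = E ^ ((1 : ℝ) / (2 * ν + 2)) := ⟨_, rfl⟩
  have hX : 0 < X := hXdef ▸ Real.rpow_pos_of_pos hE _
  obtain ⟨r, hrdef⟩ : ∃ x : ℝ, x = (a11 / a22) ^ ((1 : ℝ) / (2 * ν)) := ⟨_, rfl⟩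
  have hr : 0 < r := hrdef ▸ Real.rpow_pos_of_pos (div_pos ha11 ha22) _
  obtain ⟨Cc, hCcdef⟩ : ∃ x : ℝ, x = ((Nat.factorial ν : ℝ) ^ 2)⁻¹ * κν ^ 2 := ⟨_, rfl⟩
  have hCc : 0 < Cc := by
    rw [hCcdef]
    exact mul_pos (inv_pos.mpr (pow_pos hfact 2)) (pow_pos hκν 2)
  obtain ⟨B, hBdef⟩ : ∃ x : ℝ, x = c * b * K2 / n := ⟨_, rfl⟩
  have hB : 0 < B := by
    rw [hBdef]
    exact div_pos (mul_pos (mul_pos hc hb) hK2) hn'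
  -- powers of r
  have hrpow : ∀ m : ℕ, r ^ m = (a11 / a22) ^ ((m : ℝ) / (2 * ν)) := by
    intro m
    rw [hrdef, ← Real.rpow_natCast ((a11 / a22) ^ ((1 : ℝ) / (2 * ν))) m,
      ← Real.rpow_mul (div_pos ha11 ha22).le]
    congr 1
    ring
  have hrν : r ^ ν = t1 / t2 := by
    rw [hrpow ν, show ((ν : ℕ) : ℝ) / (2 * ν) = 1 / 2 by field_simp [hν0],
      Real.div_rpow ha11.le ha22.le, ← ht1def, ← ht2def]
  have hrν1 : r ^ (ν + 1) = a11 ^ qe / a22 ^ qe := by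
    rw [hrpow (ν + 1), show (((ν + 1 : ℕ)) : ℝ) / (2 * ν) = qe by
        rw [hqedef]; push_cast; ring,
      Real.div_rpow ha11.le ha22.le]
  have hXE : X ^ (2 * ν + 2) = E := by
    rw [hXdef, ← Real.rpow_natCast (E ^ ((1 : ℝ) / (2 * ν + 2))) (2 * ν + 2),
      ← Real.rpow_mul hE.le,
      show (1 : ℝ) / (2 * ν + 2) * ((2 * ν + 2 : ℕ) : ℝ) = 1 by
        push_cast
        field_simp,
      Real.rpow_one]
  have hkey : 2 * Cc * S * ν * (r * X ^ 2) ^ (ν + 1) = B := by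
    have h1 : (r * X ^ 2) ^ (ν + 1) = r ^ (ν + 1) * X ^ (2 * ν + 2) := by
      rw [mul_pow, ← pow_mul, show 2 * (ν + 1) = 2 * ν + 2 from by ring]
    rw [h1, hrν1, hXE, hEdef, hCcdef, hBdef]
    field_simp
  have hcore := stmt8_core ν hν a11 a12 a22 t1 t2 S Cc B X r ht1 ht2 ht1sq ht2sq hSdef hS
    hCc hX hr hrν hkey
  have hBconv : ∀ p q : ℝ, c * b * K2 / ((n : ℝ) * p * q) = B / (p * q) := by
    intro p q
    rw [hBdef, div_div]
    ring
  rw [← ht1def, ← ht2def, ← hSdef, ← hqedef, ← hEdef, ← hXdef, ← hrdef, ← hCcdef]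
  constructor
  · rw [isMinOn_iff]
    rintro ⟨u, v⟩ ⟨hu, hv⟩
    simp only at hu hv ⊢
    rw [hBconv X (r * X), hBconv u v]
    exact hcore.1 u v hu hv
  · rintro ⟨u, v⟩ ⟨hu, hv⟩ hmin
    simp only [Set.mem_setOf_eq] at hu hv
    have h1 := isMinOn_iff.mp hmin (X, r * X) ⟨hX, mul_pos hr hX⟩
    simp only at h1
    rw [hBconv u v, hBconv X (r * X)] at h1
    obtain ⟨hueq, hveq⟩ := hcore.2 u v hu hv h1
    rw [Prod.mk.injEq]
    exact ⟨hueq, hveq⟩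
end
end

section
/- Let ν ≥ 2, a > 0, and let M be a real symmetric d×d matrix that is positive semi-definite for d ≥ 2 with inf{uᵀMu/‖u‖² : u in the closed nonnegative orthant, u≠0} > 0 (for d = 1, M > 0). Then Q(u; M, a, ν) = (ν!)^{-2} uᵀMu + a(u_1⋯u_d)^{−1/ν} is a strictly convex function of u on the open positive orthant, Q(u; M, a, ν) → ∞ both as ‖u‖ → ∞ and as ‖u‖ → 0 within the positive orthant, and Q(·; M, a, ν) attains a unique minimizer in the open positive orthant. -/
open Finset
open scoped BigOperators

noncomputable section

/-- `Q(u; M, a, ν) = (ν!)⁻² uᵀMu + a (u₁⋯u_d)^{-1/ν}`. -/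
def Qfun (d : ℕ) (M : Fin d → Fin d → ℝ) (a : ℝ) (ν : ℕ) (u : Fin d → ℝ) : ℝ :=
  ((Nat.factorial ν : ℝ) ^ 2)⁻¹ * (∑ k, ∑ l, u k * u l * M k l) +
    a * (∏ j, u j) ^ (-(1 : ℝ) / ν)

/-- The open positive orthant. -/
def posOrthant (d : ℕ) : Set (Fin d → ℝ) := {u | ∀ j, 0 < u j}

namespace Stmt13

variable {d : ℕ}

/-- The quadratic form. -/
def qf (M : Fin d → Fin d → ℝ) (u : Fin d → ℝ) : ℝ := ∑ k, ∑ l, u k * u l * M k l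

lemma qf_combo (M : Fin d → Fin d → ℝ) (t s : ℝ) (x y : Fin d → ℝ) :
    qf M (fun j => t * x j + s * y j) + t * s * qf M (fun j => x j - y j)
      = t * (t + s) * qf M x + s * (t + s) * qf M y := by
  simp only [qf, Finset.mul_sum, ← Finset.sum_add_distrib]
  exact Finset.sum_congr rfl fun k _ => Finset.sum_congr rfl fun l _ => by ring

lemma qf_convex_combo (M : Fin d → Fin d → ℝ)
    (hMpsd : ∀ u : Fin d → ℝ, 0 ≤ qf M u)
    {t s : ℝ} (ht : 0 ≤ t) (hs : 0 ≤ s) (hts : t + s = 1) (x y : Fin d → ℝ) :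
    qf M (fun j => t * x j + s * y j) ≤ t * qf M x + s * qf M y := by
  have h := qf_combo M t s x y
  rw [hts] at h
  have h2 := mul_nonneg (mul_nonneg ht hs) (hMpsd (fun j => x j - y j))
  nlinarith [h, h2]

lemma rpow_prod_eq_exp {c : ℝ} (u : Fin d → ℝ) (hu : ∀ j, 0 < u j) :
    (∏ j, u j) ^ c = Real.exp (∑ j, c * Real.log (u j)) := by
  have hp : 0 < ∏ j, u j := Finset.prod_pos (fun j _ => hu j)
  rw [Real.rpow_def_of_pos hp, Real.log_prod (fun j _ => (hu j).ne'), Finset.sum_mul]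
  congr 1
  exact Finset.sum_congr rfl fun j _ => mul_comm _ _

/-- strict convexity of the sum of `c * log (u j)` for `c < 0` -/
lemma sum_clog_strict {c : ℝ} (hc : c < 0) {x y : Fin d → ℝ}
    (hx : ∀ j, 0 < x j) (hy : ∀ j, 0 < y j) (hxy : x ≠ y)
    {t s : ℝ} (ht : 0 < t) (hs : 0 < s) (hts : t + s = 1) :
    ∑ j, c * Real.log (t * x j + s * y j)
      < t * ∑ j, c * Real.log (x j) + s * ∑ j, c * Real.log (y j) := by
  rw [Finset.mul_sum, Finset.mul_sum, ← Finset.sum_add_distrib]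
  obtain ⟨j₀, hj₀⟩ := Function.ne_iff.mp hxy
  refine Finset.sum_lt_sum (fun j _ => ?_) ⟨j₀, Finset.mem_univ _, ?_⟩
  · have h := strictConcaveOn_log_Ioi.concaveOn.2 (Set.mem_Ioi.mpr (hx j))
      (Set.mem_Ioi.mpr (hy j)) ht.le hs.le hts
    simp only [smul_eq_mul] at h
    nlinarith [h]
  · have h := strictConcaveOn_log_Ioi.2 (Set.mem_Ioi.mpr (hx j₀))
      (Set.mem_Ioi.mpr (hy j₀)) hj₀ ht hs hts
    simp only [smul_eq_mul] at h
    nlinarith [h]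

/-- strict convexity inequality for `u ↦ a (∏ u j) ^ c`, `a > 0`, `c < 0`. -/
lemma Fa_strict {a c : ℝ} (ha : 0 < a) (hc : c < 0) {x y : Fin d → ℝ}
    (hx : ∀ j, 0 < x j) (hy : ∀ j, 0 < y j) (hxy : x ≠ y)
    {t s : ℝ} (ht : 0 < t) (hs : 0 < s) (hts : t + s = 1) :
    a * (∏ j, (t * x j + s * y j)) ^ c
      < t * (a * (∏ j, x j) ^ c) + s * (a * (∏ j, y j) ^ c) := by
  have hm : ∀ j, 0 < t * x j + s * y j := fun j =>
    add_pos (mul_pos ht (hx j)) (mul_pos hs (hy j))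
  rw [rpow_prod_eq_exp _ hm, rpow_prod_eq_exp _ hx, rpow_prod_eq_exp _ hy]
  set Lx := ∑ j, c * Real.log (x j)
  set Ly := ∑ j, c * Real.log (y j)
  have h1 : ∑ j, c * Real.log (t * x j + s * y j) < t * Lx + s * Ly :=
    sum_clog_strict hc hx hy hxy ht hs hts
  have h2 : Real.exp (∑ j, c * Real.log (t * x j + s * y j)) < Real.exp (t * Lx + s * Ly) :=
    Real.exp_lt_exp.mpr h1
  have h3 : Real.exp (t * Lx + s * Ly) ≤ t * Real.exp Lx + s * Real.exp Ly := by
    have := convexOn_exp.2 (Set.mem_univ Lx) (Set.mem_univ Ly) ht.le hs.le hts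
    simpa using this
  nlinarith [Real.exp_pos Lx, Real.exp_pos Ly, h2, h3]

lemma convex_posOrthant (d : ℕ) : Convex ℝ (posOrthant d) := by
  intro x hx y hy t s ht hs hts
  intro j
  simp only [Pi.add_apply, Pi.smul_apply, smul_eq_mul]
  rcases eq_or_lt_of_le ht with h | h
  · have hs1 : s = 1 := by linarith
    simp [← h, hs1]
    exact hy j
  · exact add_pos_of_pos_of_nonneg (mul_pos h (hx j)) (mul_nonneg hs (hy j).le)

lemma continuousOn_Qfun (d : ℕ) (M : Fin d → Fin d → ℝ) (a : ℝ) (ν : ℕ) :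
    ContinuousOn (Qfun d M a ν) (posOrthant d) := by
  intro u hu
  apply ContinuousAt.continuousWithinAt
  have h1 : Continuous fun v : Fin d → ℝ =>
      ((Nat.factorial ν : ℝ) ^ 2)⁻¹ * (∑ k, ∑ l, v k * v l * M k l) :=
    continuous_const.mul (continuous_finset_sum _ fun k _ =>
      continuous_finset_sum _ fun l _ =>
        ((continuous_apply k).mul (continuous_apply l)).mul continuous_const)
  have hp : 0 < ∏ j, u j := Finset.prod_pos (fun j _ => hu j)
  have hprodc : Continuous fun v : Fin d → ℝ => ∏ j, v j :=
    continuous_finset_prod _ fun i _ => continuous_apply i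
  have h2 : ContinuousAt (fun v : Fin d → ℝ => (∏ j, v j) ^ (-(1 : ℝ) / ν)) u :=
    (Real.continuousAt_rpow_const _ _ (Or.inl hp.ne')).comp hprodc.continuousAt
  exact h1.continuousAt.add (continuousAt_const.mul h2)

end Stmt13

open Stmt13

set_option maxHeartbeats 2000000 in
/-- for `ν ≥ 2`, `a > 0` and `M` symmetric positive semi-definite with
quadratic form coercive on the closed nonnegative orthant, `Q(·; M, a, ν)` is strictly convex
on the open positive orthant, blows up as `‖u‖ → ∞` and as `‖u‖ → 0` within the orthant, and
attains a unique minimizer there. -/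
theorem statement13 (d : ℕ) (hd : 1 ≤ d) (ν : ℕ) (hν : 2 ≤ ν) (a : ℝ) (ha : 0 < a)
    (M : Fin d → Fin d → ℝ) (hMsymm : ∀ k l, M k l = M l k)
    (hMpsd : ∀ u : Fin d → ℝ, 0 ≤ ∑ k, ∑ l, u k * u l * M k l)
    (hMcoer : ∃ c₀ > (0 : ℝ), ∀ u : Fin d → ℝ, (∀ i, 0 ≤ u i) →
      c₀ * (∑ i, u i ^ 2) ≤ ∑ k, ∑ l, u k * u l * M k l) :
    StrictConvexOn ℝ (posOrthant d) (Qfun d M a ν) ∧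
    (∀ C : ℝ, ∃ R : ℝ, ∀ u ∈ posOrthant d, R ≤ ‖u‖ → C ≤ Qfun d M a ν u) ∧
    (∀ C : ℝ, ∃ r > (0 : ℝ), ∀ u ∈ posOrthant d, ‖u‖ ≤ r → C ≤ Qfun d M a ν u) ∧
    (∃! u₀ : Fin d → ℝ, u₀ ∈ posOrthant d ∧ IsMinOn (Qfun d M a ν) (posOrthant d) u₀) := by
  have hνR : (0 : ℝ) < (ν : ℝ) := by exact_mod_cast Nat.lt_of_lt_of_le Nat.zero_lt_two hν
  set c : ℝ := -(1 : ℝ) / ν with hc_def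
  have hc : c < 0 := div_neg_of_neg_of_pos (by norm_num) hνR
  have hfac : (0 : ℝ) < (Nat.factorial ν : ℝ) := by exact_mod_cast ν.factorial_pos
  set inv : ℝ := ((Nat.factorial ν : ℝ) ^ 2)⁻¹ with hinv_def
  have hinv : 0 < inv := by positivity
  have hQ : ∀ u : Fin d → ℝ, Qfun d M a ν u = inv * qf M u + a * (∏ j, u j) ^ c := fun u => rfl
  have hqf_nonneg : ∀ u : Fin d → ℝ, 0 ≤ qf M u := hMpsd
  -- Part 1 : strict convexity
  have hstrict : StrictConvexOn ℝ (posOrthant d) (Qfun d M a ν) := by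
    refine ⟨convex_posOrthant d, ?_⟩
    intro x hx y hy hxy t s ht hs hts
    have hmid : t • x + s • y = fun j => t * x j + s * y j := by
      funext j; simp [smul_eq_mul]
    simp only [smul_eq_mul, hmid]
    rw [hQ, hQ, hQ]
    have hq := qf_convex_combo M hqf_nonneg ht.le hs.le hts x y
    have hF := Fa_strict (d := d) ha hc hx hy hxy ht hs hts
    have hq' : inv * qf M (fun j => t * x j + s * y j)
        ≤ inv * (t * qf M x + s * qf M y) := mul_le_mul_of_nonneg_left hq hinv.le
    nlinarith [hq', hF]
  obtain ⟨c₀, hc₀, hcoer⟩ := hMcoer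
  set k : ℝ := inv * c₀ with hk_def
  have hk : 0 < k := mul_pos hinv hc₀
  -- basic lower bound: on the orthant, Q u ≥ k * ∑ u i ^ 2 and Q u ≥ a * (∏ u)^c
  have hlow : ∀ u ∈ posOrthant d,
      k * (∑ i, u i ^ 2) ≤ Qfun d M a ν u ∧ a * (∏ j, u j) ^ c ≤ Qfun d M a ν u := by
    intro u hu
    have hp : 0 < ∏ j, u j := Finset.prod_pos (fun j _ => hu j)
    have hrp : 0 < a * (∏ j, u j) ^ c := mul_pos ha (Real.rpow_pos_of_pos hp c)
    have h1 : c₀ * (∑ i, u i ^ 2) ≤ qf M u := hcoer u (fun i => (hu i).le)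
    have h2 : inv * (c₀ * (∑ i, u i ^ 2)) ≤ inv * qf M u :=
      mul_le_mul_of_nonneg_left h1 hinv.le
    have h3 : 0 ≤ inv * qf M u := mul_nonneg hinv.le (hqf_nonneg u)
    rw [hQ]
    constructor
    · calc k * (∑ i, u i ^ 2) = inv * (c₀ * (∑ i, u i ^ 2)) := by rw [hk_def]; ring
        _ ≤ inv * qf M u := h2
        _ ≤ inv * qf M u + a * (∏ j, u j) ^ c := by linarith
    · linarith
  -- Part 2 : coercivity at infinity
  have hinfty : ∀ C : ℝ, ∃ R : ℝ, ∀ u ∈ posOrthant d, R ≤ ‖u‖ → C ≤ Qfun d M a ν u := by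
    intro C
    set R : ℝ := max 1 (Real.sqrt (max C 0 / k)) with hR_def
    have hR1 : (1 : ℝ) ≤ R := le_max_left _ _
    have hR0 : (0 : ℝ) < R := lt_of_lt_of_le one_pos hR1
    refine ⟨R, fun u hu hRu => ?_⟩
    have hex : ∃ i, R ≤ |u i| := by
      by_contra h
      push_neg at h
      have : ‖u‖ < R := (pi_norm_lt_iff hR0).mpr (fun i => by
        rw [Real.norm_eq_abs]; exact h i)
      linarith
    obtain ⟨i₀, hi₀⟩ := hex
    have hsum : R ^ 2 ≤ ∑ i, u i ^ 2 := by
      have h1 : R ^ 2 ≤ u i₀ ^ 2 := by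
        rw [← sq_abs (u i₀)]
        exact pow_le_pow_left₀ hR0.le hi₀ 2
      have h2 : u i₀ ^ 2 ≤ ∑ i, u i ^ 2 :=
        Finset.single_le_sum (fun i _ => sq_nonneg (u i)) (Finset.mem_univ i₀)
      linarith
    have hCk : max C 0 / k ≤ R ^ 2 := by
      have h1 : Real.sqrt (max C 0 / k) ≤ R := le_max_right _ _
      have h2 : Real.sqrt (max C 0 / k) ^ 2 = max C 0 / k :=
        Real.sq_sqrt (div_nonneg (le_max_right _ _) hk.le)
      nlinarith [Real.sqrt_nonneg (max C 0 / k)]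
    have hCC : C ≤ k * R ^ 2 := by
      have : k * (max C 0 / k) = max C 0 := mul_div_cancel₀ _ hk.ne'
      nlinarith [le_max_left C 0, mul_le_mul_of_nonneg_left hCk hk.le]
    have := (hlow u hu).1
    nlinarith [mul_le_mul_of_nonneg_left hsum hk.le]
  -- Part 3 : blow-up at the origin
  have hzero : ∀ C : ℝ, ∃ r > (0 : ℝ), ∀ u ∈ posOrthant d, ‖u‖ ≤ r → C ≤ Qfun d M a ν u := by
    intro C
    set e : ℝ := (d : ℝ) / ν with he_def
    have hdR : (0 : ℝ) < (d : ℝ) := by exact_mod_cast hd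
    have he : 0 < e := div_pos hdR hνR
    set C' : ℝ := max C 1 with hC'_def
    have hC' : 0 < C' := lt_of_lt_of_le one_pos (le_max_right _ _)
    set r : ℝ := min 1 ((a / C') ^ (1 / e)) with hr_def
    have hr : 0 < r := lt_min one_pos (Real.rpow_pos_of_pos (div_pos ha hC') _)
    refine ⟨r, hr, fun u hu hur => ?_⟩
    have hub : ∀ j, u j ≤ r := fun j =>
      le_trans (le_trans (le_abs_self _) (by rw [← Real.norm_eq_abs]; exact norm_le_pi_norm u j)) hur
    have hprod : ∏ j, u j ≤ r ^ d := by
      calc ∏ j, u j ≤ ∏ _j : Fin d, r :=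
            Finset.prod_le_prod (fun j _ => (hu j).le) (fun j _ => hub j)
        _ = r ^ d := by rw [Finset.prod_const, Finset.card_univ, Fintype.card_fin]
    have hp : 0 < ∏ j, u j := Finset.prod_pos (fun j _ => hu j)
    have h1 : (r ^ d : ℝ) ^ c ≤ (∏ j, u j) ^ c :=
      Real.rpow_le_rpow_of_nonpos hp hprod hc.le
    have hre : (r ^ d : ℝ) ^ c = r ^ (-e) := by
      rw [← Real.rpow_natCast r d, ← Real.rpow_mul hr.le]
      congr 1
      rw [hc_def, he_def]; field_simp
    have hrle : r ^ e ≤ a / C' := by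
      have h2 : r ^ e ≤ ((a / C') ^ (1 / e)) ^ e :=
        Real.rpow_le_rpow hr.le (min_le_right _ _) he.le
      rwa [← Real.rpow_mul (div_pos ha hC').le, one_div_mul_cancel he.ne', Real.rpow_one] at h2
    have hrpe : 0 < r ^ e := Real.rpow_pos_of_pos hr e
    have hCar : C' ≤ a * r ^ (-e) := by
      have hCra : C' * r ^ e ≤ a := by
        calc C' * r ^ e ≤ C' * (a / C') := mul_le_mul_of_nonneg_left hrle hC'.le
          _ = a := mul_div_cancel₀ _ hC'.ne'
      rw [Real.rpow_neg hr.le, ← div_eq_mul_inv]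
      exact (le_div_iff₀ hrpe).mpr hCra
    have h2 := (hlow u hu).2
    have h3 : a * (r ^ d : ℝ) ^ c ≤ a * (∏ j, u j) ^ c :=
      mul_le_mul_of_nonneg_left h1 ha.le
    rw [hre] at h3
    have : C ≤ C' := le_max_left _ _
    linarith
  -- Part 4 : unique minimizer
  refine ⟨hstrict, hinfty, hzero, ?_⟩
  set u₁ : Fin d → ℝ := fun _ => 1 with hu₁_def
  have hu₁ : u₁ ∈ posOrthant d := fun j => one_pos
  set C : ℝ := Qfun d M a ν u₁ with hC_def
  have hCa : a ≤ C := by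
    have h3 : 0 ≤ inv * qf M u₁ := mul_nonneg hinv.le (hqf_nonneg u₁)
    have h4 : C = inv * qf M u₁ + a * (1 : ℝ) ^ c := by
      rw [hC_def, hQ]
      congr 2
      simp [hu₁_def]
    rw [h4, Real.one_rpow]; linarith
  have hC : 0 < C := lt_of_lt_of_le ha hCa
  set R : ℝ := max 1 (Real.sqrt (C / k)) with hR_def
  have hR1 : (1 : ℝ) ≤ R := le_max_left _ _
  have hR0 : (0 : ℝ) < R := lt_of_lt_of_le one_pos hR1
  set p : ℝ := ((C / a) ^ (ν : ℝ))⁻¹ with hp_def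
  have hCapos : 0 < C / a := div_pos hC ha
  have hppos : 0 < p := inv_pos.mpr (Real.rpow_pos_of_pos hCapos _)
  have hp1 : p ≤ 1 := by
    have h1 : (1 : ℝ) ≤ (C / a) ^ (ν : ℝ) := by
      have hbase : 1 ≤ C / a := (one_le_div ha).mpr hCa
      calc (1 : ℝ) = (C / a) ^ (0 : ℝ) := (Real.rpow_zero _).symm
        _ ≤ (C / a) ^ (ν : ℝ) := Real.rpow_le_rpow_of_exponent_le hbase (by positivity)
    rw [hp_def]
    exact inv_le_one_of_one_le₀ h1
  have hRd1 : (1 : ℝ) ≤ R ^ (d - 1) := one_le_pow₀ hR1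
  have hRdpos : (0 : ℝ) < R ^ (d - 1) := by positivity
  set ε : ℝ := p / R ^ (d - 1) with hε_def
  have hε : 0 < ε := div_pos hppos hRdpos
  have hε1 : ε ≤ 1 := le_trans (div_le_self hppos.le hRd1) hp1
  set K : Set (Fin d → ℝ) := Set.Icc (fun _ => ε) (fun _ => R) with hK_def
  have hKsub : K ⊆ posOrthant d := fun u hu j => lt_of_lt_of_le hε (hu.1 j)
  have hu₁K : u₁ ∈ K := ⟨fun j => hε1, fun j => hR1⟩
  have hbox : ∀ u ∈ posOrthant d, Qfun d M a ν u ≤ C → u ∈ K := by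
    intro u hu hQu
    have hup : ∀ j, 0 < u j := hu
    have hPu : 0 < ∏ j, u j := Finset.prod_pos (fun j _ => hup j)
    have hub : ∀ j, u j ≤ R := by
      intro j
      have h1 : u j ^ 2 ≤ ∑ i, u i ^ 2 :=
        Finset.single_le_sum (fun i _ => sq_nonneg (u i)) (Finset.mem_univ j)
      have h2 := (hlow u hu).1
      have h3 : u j ^ 2 ≤ C / k := by
        rw [le_div_iff₀ hk]
        nlinarith [mul_le_mul_of_nonneg_left h1 hk.le]
      have h4 : u j ≤ Real.sqrt (C / k) := by
        have h5 := Real.sqrt_le_sqrt h3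
        rwa [Real.sqrt_sq (hup j).le] at h5
      exact le_trans h4 (le_max_right _ _)
    have hPl : p ≤ ∏ j, u j := by
      have h1 : a * (∏ j, u j) ^ c ≤ C := le_trans (hlow u hu).2 hQu
      have hxc : 0 < (∏ j, u j) ^ c := Real.rpow_pos_of_pos hPu c
      have h2 : (∏ j, u j) ^ c ≤ C / a := (le_div_iff₀' ha).mpr h1
      have h3 : (C / a) ^ (-(ν : ℝ)) ≤ ((∏ j, u j) ^ c) ^ (-(ν : ℝ)) :=
        Real.rpow_le_rpow_of_nonpos hxc h2 (neg_nonpos.mpr hνR.le)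
      have h4 : ((∏ j, u j) ^ c) ^ (-(ν : ℝ)) = ∏ j, u j := by
        rw [← Real.rpow_mul hPu.le]
        have : c * -(ν : ℝ) = 1 := by rw [hc_def]; field_simp
        rw [this, Real.rpow_one]
      have h5 : (C / a) ^ (-(ν : ℝ)) = p := by
        rw [hp_def, Real.rpow_neg hCapos.le]
      rw [h4, h5] at h3
      exact h3
    have hlb : ∀ j, ε ≤ u j := by
      intro j
      have h1 : ∏ i ∈ Finset.univ.erase j, u i ≤ R ^ (d - 1) := by
        calc ∏ i ∈ Finset.univ.erase j, u i ≤ ∏ _i ∈ Finset.univ.erase j, R :=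
              Finset.prod_le_prod (fun i _ => (hup i).le) (fun i _ => hub i)
          _ = R ^ (d - 1) := by
              rw [Finset.prod_const, Finset.card_erase_of_mem (Finset.mem_univ j),
                Finset.card_univ, Fintype.card_fin]
      have h2 : u j * ∏ i ∈ Finset.univ.erase j, u i = ∏ i, u i :=
        Finset.mul_prod_erase _ _ (Finset.mem_univ j)
      have h3 : p ≤ u j * R ^ (d - 1) := by
        calc p ≤ ∏ i, u i := hPl
          _ = u j * ∏ i ∈ Finset.univ.erase j, u i := h2.symm
          _ ≤ u j * R ^ (d - 1) := mul_le_mul_of_nonneg_left h1 (hup j).le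
      rw [hε_def]
      exact (div_le_iff₀ hRdpos).mpr h3
    exact ⟨fun j => hlb j, fun j => hub j⟩
  obtain ⟨u₀, hu₀K, hu₀min⟩ := (isCompact_Icc (a := fun _ => ε) (b := fun _ => R)).exists_isMinOn
    ⟨u₁, hu₁K⟩ ((continuousOn_Qfun d M a ν).mono hKsub)
  have hu₀orth : u₀ ∈ posOrthant d := hKsub hu₀K
  have hu₀C : Qfun d M a ν u₀ ≤ C := isMinOn_iff.mp hu₀min u₁ hu₁K
  have hglobal : IsMinOn (Qfun d M a ν) (posOrthant d) u₀ := by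
    rw [isMinOn_iff]
    intro u hu
    by_cases hcase : Qfun d M a ν u ≤ C
    · exact isMinOn_iff.mp hu₀min u (hbox u hu hcase)
    · push_neg at hcase; linarith
  refine ⟨u₀, ⟨hu₀orth, hglobal⟩, ?_⟩
  rintro v ⟨hvorth, hvmin⟩
  by_contra hne
  have hQeq : Qfun d M a ν v = Qfun d M a ν u₀ :=
    le_antisymm (isMinOn_iff.mp hvmin u₀ hu₀orth) (isMinOn_iff.mp hglobal v hvorth)
  have hhalf : (0 : ℝ) < 1 / 2 := by norm_num
  have hmid := hstrict.2 hvorth hu₀orth hne hhalf hhalf (by norm_num)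
  have hmidmem : (1 / 2 : ℝ) • v + (1 / 2 : ℝ) • u₀ ∈ posOrthant d :=
    convex_posOrthant d hvorth hu₀orth hhalf.le hhalf.le (by norm_num)
  have hvm := isMinOn_iff.mp hvmin _ hmidmem
  simp only [smul_eq_mul] at hmid
  linarith
end
end

section
/- Let p be a nonnegative integer, b > 0, and c ∈ ℝ. Then ∫_{−∞}^0 Φ(ub + c)|u|^p du + ∫_0^∞ Φ(−ub − c) u^p du = (1/((p+1) b^{p+1})) ∫_{−∞}^∞ φ(v) |v − c|^{p+1} dv, where φ and Φ are the standard normal density and distribution function. -/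
open MeasureTheory Real
open scoped Topology

noncomputable section

/-- Standard normal density `φ(t) = (2π)^{-1/2} e^{-t²/2}`. -/
def stdGauss (t : ℝ) : ℝ := (Real.sqrt (2 * π))⁻¹ * Real.exp (-t ^ 2 / 2)

/-- Standard normal distribution function `Φ(y) = ∫_{-∞}^y φ(t) dt`. -/
def stdGaussCdf (y : ℝ) : ℝ := ∫ t in Set.Iic y, stdGauss t

lemma stdGauss_nonneg (t : ℝ) : 0 ≤ stdGauss t := by unfold stdGauss; positivity

lemma stdGauss_neg (t : ℝ) : stdGauss (-t) = stdGauss t := by simp [stdGauss, neg_sq]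

lemma measurable_stdGauss : Measurable stdGauss := by unfold stdGauss; fun_prop

lemma integrable_stdGauss : Integrable stdGauss := by
  have h := (integrable_exp_neg_mul_sq (show (0:ℝ) < 2⁻¹ by norm_num)).const_mul
    (Real.sqrt (2*π))⁻¹
  refine h.congr (Filter.Eventually.of_forall fun t => ?_)
  simp only [stdGauss]
  congr 1
  ring

lemma integrable_stdGauss_mul_abs_pow (c : ℝ) (n : ℕ) :
    Integrable fun t => stdGauss t * |t - c| ^ n := by
  have hI : Integrable fun x : ℝ => |x| ^ n * Real.exp (-2⁻¹ * x ^ 2) := by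
    have h := (integrable_rpow_mul_exp_neg_mul_sq (show (0:ℝ) < 2⁻¹ by norm_num)
      (show (-1:ℝ) < (n:ℝ) by exact lt_of_lt_of_le neg_one_lt_zero (Nat.cast_nonneg n))).abs
    refine h.congr (Filter.Eventually.of_forall fun x => ?_)
    show |x ^ (n:ℝ) * Real.exp (-2⁻¹ * x ^ 2)| = |x| ^ n * Real.exp (-2⁻¹ * x ^ 2)
    rw [Real.rpow_natCast, abs_mul, abs_pow, abs_of_nonneg (Real.exp_pos _).le]
  have hg : Integrable fun x : ℝ =>
      (Real.sqrt (2*π))⁻¹ * 2^n * (|x|^n * Real.exp (-2⁻¹ * x^2))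
        + (Real.sqrt (2*π))⁻¹ * 2^n * |c|^n * Real.exp (-2⁻¹ * x^2) :=
    (hI.const_mul _).add ((integrable_exp_neg_mul_sq (show (0:ℝ) < 2⁻¹ by norm_num)).const_mul _)
  refine hg.mono' ?_ (Filter.Eventually.of_forall fun t => ?_)
  · exact (measurable_stdGauss.mul ((measurable_id.sub_const c).abs.pow_const n)).aestronglyMeasurable
  · have h1 : |t - c| ^ n ≤ 2^n * (|t|^n + |c|^n) := by
      calc |t - c| ^ n ≤ (|t| + |c|)^n :=
            pow_le_pow_left₀ (abs_nonneg _) (abs_sub t c) n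
        _ ≤ (2 * max |t| |c|)^n := by
            refine pow_le_pow_left₀ (by positivity) ?_ n
            rw [two_mul]
            exact add_le_add (le_max_left _ _) (le_max_right _ _)
        _ = 2^n * max |t| |c| ^ n := mul_pow _ _ _
        _ ≤ 2^n * (|t|^n + |c|^n) := by
            gcongr
            rcases le_total |t| |c| with h|h
            · rw [max_eq_right h]; exact le_add_of_nonneg_left (by positivity)
            · rw [max_eq_left h]; exact le_add_of_nonneg_right (by positivity)
    have hE : Real.exp (-t^2/2) = Real.exp (-2⁻¹ * t^2) := by congr 1; ring
    rw [Real.norm_eq_abs, abs_of_nonneg (mul_nonneg (stdGauss_nonneg t) (by positivity))]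
    unfold stdGauss
    rw [hE]
    have h2 : (Real.sqrt (2*π))⁻¹ * Real.exp (-2⁻¹ * t^2) * |t - c|^n
        ≤ (Real.sqrt (2*π))⁻¹ * Real.exp (-2⁻¹ * t^2) * (2^n * (|t|^n + |c|^n)) :=
      mul_le_mul_of_nonneg_left h1 (by positivity)
    refine h2.trans (le_of_eq ?_)
    ring

lemma stdGaussCdf_neg (y : ℝ) : stdGaussCdf (-y) = ∫ t in Set.Ici y, stdGauss t := by
  have h := integral_comp_neg_Iic (-y) stdGauss
  simp only [stdGauss_neg, neg_neg] at h
  rw [stdGaussCdf, h, integral_Ici_eq_integral_Ioi]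

lemma flip_int (f : ℝ → ℝ) : ∫ u in Set.Iic (0:ℝ), f (-u) = ∫ s in Set.Ici (0:ℝ), f s := by
  rw [integral_comp_neg_Iic, neg_zero, integral_Ici_eq_integral_Ioi]

lemma pow_int (p : ℕ) (r : ℝ) :
    (∫ s in Set.Ici (0:ℝ), (Set.Iic r).indicator (fun s => s ^ p) s)
      = max r 0 ^ (p+1) / (p+1) := by
  rw [setIntegral_indicator measurableSet_Iic]
  rcases lt_or_ge r 0 with h | h
  · have he : Set.Ici (0:ℝ) ∩ Set.Iic r = ∅ := by
      ext s; simp only [Set.mem_inter_iff, Set.mem_Ici, Set.mem_Iic, Set.mem_empty_iff_false,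
        iff_false, not_and, not_le]
      intro hs; linarith
    rw [he]
    simp [max_eq_right h.le, zero_pow (Nat.succ_ne_zero p)]
  · rw [Set.Ici_inter_Iic, max_eq_left h, integral_Icc_eq_integral_Ioc,
      ← intervalIntegral.integral_of_le h, integral_pow]
    simp [zero_pow (Nat.succ_ne_zero p)]

lemma fubini_key (p : ℕ) (w : ℝ → ℝ) (hw : Measurable w)
    (hwi : Integrable fun t => stdGauss t * max (w t) 0 ^ (p+1)) :
    ∫ s in Set.Ici (0:ℝ), (∫ t, (Set.Iic (w t)).indicator (fun s' => s' ^ p) s * stdGauss t)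
      = ∫ t, stdGauss t * max (w t) 0 ^ (p+1) / (p+1) := by
  set F : ℝ × ℝ → ℝ :=
    fun q => (Set.Iic (w q.2)).indicator (fun s' => s' ^ p) q.1 * stdGauss q.2 with hF
  -- measurability
  have hFmeas : Measurable F := by
    have hFeq : F = fun q : ℝ × ℝ =>
        Set.indicator {q : ℝ × ℝ | q.1 ≤ w q.2} (fun q => q.1 ^ p) q * stdGauss q.2 := by
      funext q
      simp only [hF, Set.indicator, Set.mem_Iic, Set.mem_setOf_eq]
    rw [hFeq]
    exact (((measurable_fst.pow_const p).indicator
      (measurableSet_le measurable_fst (hw.comp measurable_snd))).mul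
      (measurable_stdGauss.comp measurable_snd))
  -- sections in s
  have hsec : ∀ t s, F (s, t) = stdGauss t * (Set.Iic (w t)).indicator (fun s' => s' ^ p) s := by
    intro t s; simp only [hF]; ring
  -- value of the s-integral
  have hsint : ∀ t, (∫ s in Set.Ici (0:ℝ), F (s, t))
      = stdGauss t * max (w t) 0 ^ (p+1) / (p+1) := by
    intro t
    simp_rw [hsec t]
    rw [integral_const_mul, pow_int, mul_div_assoc]
  -- integrability on the product
  have hFint : Integrable F ((volume.restrict (Set.Ici 0)).prod volume) := by
    rw [integrable_prod_iff' hFmeas.aestronglyMeasurable]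
    constructor
    · refine Filter.Eventually.of_forall fun t => ?_
      have : (fun s => F (s, t)) = fun s => stdGauss t * (Set.Iic (w t)).indicator
          (fun s' => s' ^ p) s := funext fun s => hsec t s
      rw [this]
      apply Integrable.const_mul
      rw [integrable_indicator_iff measurableSet_Iic]
      rw [IntegrableOn, Measure.restrict_restrict measurableSet_Iic, Set.Iic_inter_Ici]
      exact (continuous_pow p).integrableOn_Icc
    · have heq : (fun t => ∫ s in Set.Ici (0:ℝ), ‖F (s, t)‖)
          = fun t => stdGauss t * max (w t) 0 ^ (p+1) / (p+1) := by
        funext t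
        rw [← hsint t]
        refine setIntegral_congr_fun measurableSet_Ici fun s hs => ?_
        rw [Real.norm_eq_abs, abs_of_nonneg]
        apply mul_nonneg _ (stdGauss_nonneg t)
        by_cases hmem : s ∈ Set.Iic (w t)
        · rw [Set.indicator_of_mem hmem]
          exact pow_nonneg hs p
        · rw [Set.indicator_of_notMem hmem]
      rw [heq]
      exact hwi.div_const _
  have hswap := integral_integral_swap (f := fun s t => F (s, t))
    (μ := volume.restrict (Set.Ici 0)) (ν := volume) hFint
  rw [hswap]
  exact integral_congr_ae (Filter.Eventually.of_forall hsint)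

/-- for a nonnegative integer `p`, `b > 0` and `c ∈ ℝ`,
`∫_{-∞}^0 Φ(ub+c)|u|^p du + ∫_0^∞ Φ(-ub-c)u^p du
  = (1/((p+1) b^{p+1})) ∫_ℝ φ(v)|v-c|^{p+1} dv`. -/
theorem statement16 (p : ℕ) (b : ℝ) (hb : 0 < b) (c : ℝ) :
    (∫ u in Set.Iic (0 : ℝ), stdGaussCdf (u * b + c) * |u| ^ p) +
      (∫ u in Set.Ici (0 : ℝ), stdGaussCdf (-(u * b) - c) * u ^ p) =
    (1 / (((p : ℝ) + 1) * b ^ (p + 1))) * ∫ v : ℝ, stdGauss v * |v - c| ^ (p + 1) := by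
  have hbne : b ≠ 0 := ne_of_gt hb
  have hpne : ((p : ℝ) + 1) ≠ 0 := by positivity
  set w1 : ℝ → ℝ := fun t => (c - t) / b with hw1def
  set w2 : ℝ → ℝ := fun t => (t - c) / b with hw2def
  have hw1 : Measurable w1 := by fun_prop
  have hw2 : Measurable w2 := by fun_prop
  have hmaj : Integrable fun t => stdGauss t * (|t - c| ^ (p+1) / b ^ (p+1)) := by
    refine ((integrable_stdGauss_mul_abs_pow c (p+1)).div_const (b ^ (p+1))).congr
      (Filter.Eventually.of_forall fun t => ?_)
    show stdGauss t * |t - c| ^ (p+1) / b ^ (p+1) = stdGauss t * (|t - c| ^ (p+1) / b ^ (p+1))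
    rw [mul_div_assoc]
  have hwi : ∀ w : ℝ → ℝ, Measurable w → (∀ t, max (w t) 0 ≤ |t - c| / b) →
      Integrable fun t => stdGauss t * max (w t) 0 ^ (p+1) := by
    intro w hw hwb
    refine hmaj.mono' ((measurable_stdGauss.mul
      ((hw.max measurable_const).pow_const _)).aestronglyMeasurable)
      (Filter.Eventually.of_forall fun t => ?_)
    rw [Real.norm_eq_abs, abs_of_nonneg
      (mul_nonneg (stdGauss_nonneg t) (pow_nonneg (le_max_right _ _) _))]
    have h1 : max (w t) 0 ^ (p+1) ≤ (|t - c| / b) ^ (p+1) :=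
      pow_le_pow_left₀ (le_max_right _ _) (hwb t) _
    calc stdGauss t * max (w t) 0 ^ (p+1) ≤ stdGauss t * (|t - c| / b) ^ (p+1) :=
          mul_le_mul_of_nonneg_left h1 (stdGauss_nonneg t)
      _ = stdGauss t * (|t - c| ^ (p+1) / b ^ (p+1)) := by rw [div_pow]
  have hb1 : ∀ t, max (w1 t) 0 ≤ |t - c| / b := by
    intro t
    apply max_le _ (by positivity)
    show (c - t) / b ≤ |t - c| / b
    gcongr
    rw [abs_sub_comm]
    exact le_abs_self _
  have hb2 : ∀ t, max (w2 t) 0 ≤ |t - c| / b := by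
    intro t
    apply max_le _ (by positivity)
    show (t - c) / b ≤ |t - c| / b
    gcongr
    exact le_abs_self _
  have hwi1 := hwi w1 hw1 hb1
  have hwi2 := hwi w2 hw2 hb2
  have key1 := fubini_key p w1 hw1 hwi1
  have key2 := fubini_key p w2 hw2 hwi2
  have inner1 : ∀ s : ℝ, (∫ t, (Set.Iic (w1 t)).indicator (fun s' => s' ^ p) s * stdGauss t)
      = stdGaussCdf (c - s * b) * s ^ p := by
    intro s
    have heq : (fun t => (Set.Iic (w1 t)).indicator (fun s' => s' ^ p) s * stdGauss t)
        = (Set.Iic (c - s * b)).indicator (fun t => s ^ p * stdGauss t) := by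
      funext t
      have hiff : s ≤ w1 t ↔ t ≤ c - s * b := by
        show s ≤ (c - t) / b ↔ _
        rw [le_div_iff₀ hb]
        constructor <;> intro h <;> linarith
      simp only [Set.indicator_apply, Set.mem_Iic, hiff]
      split_ifs <;> ring
    rw [heq, integral_indicator measurableSet_Iic, integral_const_mul, stdGaussCdf, mul_comm]
  have inner2 : ∀ s : ℝ, (∫ t, (Set.Iic (w2 t)).indicator (fun s' => s' ^ p) s * stdGauss t)
      = stdGaussCdf (-(s * b) - c) * s ^ p := by
    intro s
    have heq : (fun t => (Set.Iic (w2 t)).indicator (fun s' => s' ^ p) s * stdGauss t)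
        = (Set.Ici (s * b + c)).indicator (fun t => s ^ p * stdGauss t) := by
      funext t
      have hiff : s ≤ w2 t ↔ s * b + c ≤ t := by
        show s ≤ (t - c) / b ↔ _
        rw [le_div_iff₀ hb]
        constructor <;> intro h <;> linarith
      simp only [Set.indicator_apply, Set.mem_Iic, Set.mem_Ici, hiff]
      split_ifs <;> ring
    rw [heq, integral_indicator measurableSet_Ici, integral_const_mul,
      show -(s * b) - c = -(s * b + c) by ring, stdGaussCdf_neg, mul_comm]
  have e1 : (∫ u in Set.Iic (0:ℝ), stdGaussCdf (u * b + c) * |u| ^ p)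
      = ∫ s in Set.Ici (0:ℝ), stdGaussCdf (c - s * b) * s ^ p := by
    rw [← flip_int (fun s => stdGaussCdf (c - s * b) * s ^ p)]
    refine setIntegral_congr_fun measurableSet_Iic fun u hu => ?_
    show stdGaussCdf (u * b + c) * |u| ^ p = stdGaussCdf (c - -u * b) * (-u) ^ p
    rw [show c - -u * b = u * b + c by ring, abs_of_nonpos hu]
  have e1' : (∫ s in Set.Ici (0:ℝ), stdGaussCdf (c - s * b) * s ^ p)
      = ∫ t, stdGauss t * max (w1 t) 0 ^ (p+1) / (p+1) := by
    rw [← key1]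
    exact setIntegral_congr_fun measurableSet_Ici fun s _ => (inner1 s).symm
  have e2 : (∫ u in Set.Ici (0:ℝ), stdGaussCdf (-(u * b) - c) * u ^ p)
      = ∫ t, stdGauss t * max (w2 t) 0 ^ (p+1) / (p+1) := by
    rw [← key2]
    exact setIntegral_congr_fun measurableSet_Ici fun s _ => (inner2 s).symm
  rw [e1, e1', e2, ← integral_add (hwi1.div_const _) (hwi2.div_const _)]
  have efin : (fun t => stdGauss t * max (w1 t) 0 ^ (p+1) / (p+1)
        + stdGauss t * max (w2 t) 0 ^ (p+1) / (p+1))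
      = fun t => (stdGauss t * |t - c| ^ (p+1)) * (1 / (((p:ℝ)+1) * b ^ (p+1))) := by
    funext t
    have hmax : max (w1 t) 0 ^ (p+1) + max (w2 t) 0 ^ (p+1) = |t - c| ^ (p+1) / b ^ (p+1) := by
      have hx : w1 t = -(w2 t) := by show (c - t)/b = -((t - c)/b); ring
      rcases le_total (w2 t) 0 with h | h
      · have habs : -(w2 t) = |t - c| / b := by
          have ht : t - c ≤ 0 := by
            have := h
            rw [hw2def] at this
            simp only at this
            by_contra hc'
            push_neg at hc'
            have : 0 < (t - c)/b := div_pos (by linarith) hb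
            linarith
          show -((t - c)/b) = |t - c| / b
          rw [abs_of_nonpos ht]
          ring
        rw [hx, max_eq_left (neg_nonneg.2 h), max_eq_right h,
          zero_pow (Nat.succ_ne_zero p), add_zero, habs, div_pow]
      · have habs : w2 t = |t - c| / b := by
          have ht : 0 ≤ t - c := by
            have := h
            rw [hw2def] at this
            simp only at this
            by_contra hc'
            push_neg at hc'
            have : (t - c)/b < 0 := div_neg_of_neg_of_pos (by linarith) hb
            linarith
          show (t - c)/b = |t - c| / b
          rw [abs_of_nonneg ht]
        rw [hx, max_eq_right (neg_nonpos.2 h), max_eq_left h,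
          zero_pow (Nat.succ_ne_zero p), zero_add, habs, div_pow]
    rw [← add_div, ← mul_add, hmax, mul_one_div, ← mul_div_assoc, div_div,
      mul_comm (b ^ (p+1)) ((p:ℝ)+1)]
  rw [efin, integral_mul_const, mul_comm]
end
end
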